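/- Kostadinova–Minkova formula: for n = ℓ(k+1) + m with m ∈ {0,1,...,k} and ℓ ≥ 1, the pmf of the Poisson distribution of order k satisfies p_n = e^{-kλ} [ Σ_{j=1}^{n} C(n-1, j-1) λ^j/j! − Σ_{i=1}^{ℓ} (−1)^{i−1} (λ^i/i!) Σ_{j=0}^{n−i(k+1)} C(n − i(k+1) + i − 1, j + i − 1) λ^j/j! ]. -/

import Mathlib

open Finset PowerSeries

/-- The polynomial part of the pmf of the Poisson distribution of order `k`:
`P k n x = ∑_{n₁+2n₂+⋯+k·n_k = n} x^{n₁+⋯+n_k} / (n₁!⋯n_k!)`. -/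
noncomputable def poissonOrderKSum (k n : ℕ) (x : ℝ) : ℝ :=
  ∑ f ∈ ((Fintype.piFinset fun _ : Fin k => Finset.range (n + 1)).filter
      fun f => ∑ i : Fin k, (i.1 + 1) * f i = n),
    x ^ (∑ i : Fin k, f i) / ∏ i : Fin k, (Nat.factorial (f i) : ℝ)


private lemma km_geom (k : ℕ) :
    (∑ i ∈ Finset.range k, (PowerSeries.X : ℝ⟦X⟧) ^ i) * (1 - PowerSeries.X)
      = 1 - PowerSeries.X ^ k := by
  have h := geom_sum_mul (PowerSeries.X : ℝ⟦X⟧) k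
  have h2 : (∑ i ∈ Finset.range k, (PowerSeries.X : ℝ⟦X⟧) ^ i) * (1 - PowerSeries.X)
      = -((∑ i ∈ Finset.range k, (PowerSeries.X : ℝ⟦X⟧) ^ i) * (PowerSeries.X - 1)) := by ring
  rw [h2, h]; ring

private lemma km_qx (k : ℕ) :
    (∑ i : Fin k, (PowerSeries.X : ℝ⟦X⟧) ^ (i.1 + 1))
      = PowerSeries.X * ∑ i ∈ Finset.range k, (PowerSeries.X : ℝ⟦X⟧) ^ i := by
  rw [Fin.sum_univ_eq_sum_range (fun i => (PowerSeries.X : ℝ⟦X⟧) ^ (i + 1)), Finset.mul_sum]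
  exact Finset.sum_congr rfl fun i _ => by ring

private lemma km_sub_pow (k j : ℕ) :
    (1 - (PowerSeries.X : ℝ⟦X⟧) ^ k) ^ j
      = ∑ i ∈ Finset.range (j + 1),
          ((-1 : ℝ) ^ i * (j.choose i : ℝ)) • (PowerSeries.X : ℝ⟦X⟧) ^ (k * i) := by
  have h : (1 - (PowerSeries.X : ℝ⟦X⟧) ^ k) = (-(PowerSeries.X ^ k) + 1) := by ring
  rw [h, add_pow]
  refine Finset.sum_congr rfl fun i _ => ?_
  rw [smul_eq_C_mul]
  simp only [map_mul, map_pow, map_neg, map_one, map_natCast]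
  ring

/-- coefficient of `X^n` in `q^j` for `j ≥ 1`. -/
private lemma km_coeff_q_pow (k j n : ℕ) (hj : 1 ≤ j) :
    (PowerSeries.coeff (R := ℝ) n) ((∑ i : Fin k, (PowerSeries.X : ℝ⟦X⟧) ^ (i.1 + 1)) ^ j)
      = ∑ i ∈ Finset.range (j + 1), (-1 : ℝ) ^ i * (j.choose i : ℝ) *
          (if j + k * i ≤ n then (((n - k * i - 1).choose (j - 1) : ℕ) : ℝ) else 0) := by
  set q : ℝ⟦X⟧ := ∑ i : Fin k, (PowerSeries.X : ℝ⟦X⟧) ^ (i.1 + 1) with hq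
  have hunit : ((1 - PowerSeries.X : ℝ⟦X⟧) ^ j) * (invOneSubPow ℝ j).val = 1 := by
    rw [← invOneSubPow_inv_eq_one_sub_pow]
    exact (invOneSubPow ℝ j).inv_val
  have hmain : q ^ j = PowerSeries.X ^ j * (1 - PowerSeries.X ^ k) ^ j
      * (invOneSubPow ℝ j).val := by
    have h1 : q ^ j * ((1 - PowerSeries.X : ℝ⟦X⟧) ^ j)
        = PowerSeries.X ^ j * (1 - PowerSeries.X ^ k) ^ j := by
      rw [← mul_pow, ← mul_pow]
      congr 1
      rw [hq, km_qx, mul_assoc, km_geom]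
    calc q ^ j = q ^ j * (((1 - PowerSeries.X : ℝ⟦X⟧) ^ j) * (invOneSubPow ℝ j).val) := by
          rw [hunit, mul_one]
      _ = (q ^ j * ((1 - PowerSeries.X : ℝ⟦X⟧) ^ j)) * (invOneSubPow ℝ j).val := by ring
      _ = PowerSeries.X ^ j * (1 - PowerSeries.X ^ k) ^ j * (invOneSubPow ℝ j).val := by
          rw [h1]
  rw [hmain, km_sub_pow]
  rw [Finset.mul_sum, Finset.sum_mul, map_sum]
  refine Finset.sum_congr rfl fun i _ => ?_
  rw [mul_smul_comm, smul_mul_assoc, map_smul, smul_eq_mul]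
  congr 1
  rw [← pow_add, PowerSeries.coeff_X_pow_mul',
    invOneSubPow_val_eq_mk_sub_one_add_choose_of_pos (S := ℝ) (d := j) hj, PowerSeries.coeff_mk]
  by_cases h : j + k * i ≤ n
  · rw [if_pos h, if_pos h]
    congr 2
    have := hj
    generalize hKI : k * i = a at *
    omega
  · rw [if_neg h, if_neg h]

/-- equalize index sets: the power-series sum over `range (j+1)` with the `if`
equals the clean sum over `range (ℓ+1)`. -/
private lemma km_sum_eq (k n ℓ j : ℕ) (hj : 1 ≤ j) (hjn : j ≤ n)
    (hle : ∀ i, 1 ≤ i → i ≤ ℓ → k * i + i ≤ n) (hlt : n < (ℓ + 1) * (k + 1)) :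
    (∑ i ∈ Finset.range (j + 1), (-1 : ℝ) ^ i * (j.choose i : ℝ) *
        (if j + k * i ≤ n then (((n - k * i - 1).choose (j - 1) : ℕ) : ℝ) else 0))
      = ∑ i ∈ Finset.range (ℓ + 1), (-1 : ℝ) ^ i * (j.choose i : ℝ) *
          (((n - k * i - 1).choose (j - 1) : ℕ) : ℝ) := by
  set M := min j ℓ with hM
  have h1 : (∑ i ∈ Finset.range (j + 1), (-1 : ℝ) ^ i * (j.choose i : ℝ) *
      (if j + k * i ≤ n then (((n - k * i - 1).choose (j - 1) : ℕ) : ℝ) else 0))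
      = ∑ i ∈ Finset.range (M + 1), (-1 : ℝ) ^ i * (j.choose i : ℝ) *
        (if j + k * i ≤ n then (((n - k * i - 1).choose (j - 1) : ℕ) : ℝ) else 0) := by
    refine (Finset.sum_subset (Finset.range_subset_range.2 (by omega)) ?_).symm
    intro i hi hni
    rw [Finset.mem_range] at hi hni
    have hiℓ : ℓ < i := by omega
    have hij : i ≤ j := by omega
    rw [if_neg, mul_zero]
    intro hcon
    have h2 : (ℓ + 1) * (k + 1) ≤ i * (k + 1) := Nat.mul_le_mul_right _ (by omega)
    have h3 : i * (k + 1) = k * i + i := by ring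
    omega
  have h2 : (∑ i ∈ Finset.range (ℓ + 1), (-1 : ℝ) ^ i * (j.choose i : ℝ) *
      (((n - k * i - 1).choose (j - 1) : ℕ) : ℝ))
      = ∑ i ∈ Finset.range (M + 1), (-1 : ℝ) ^ i * (j.choose i : ℝ) *
        (((n - k * i - 1).choose (j - 1) : ℕ) : ℝ) := by
    refine (Finset.sum_subset (Finset.range_subset_range.2 (by omega)) ?_).symm
    intro i hi hni
    rw [Finset.mem_range] at hi hni
    have hij : j < i := by omega
    rw [Nat.choose_eq_zero_of_lt hij]
    simp
  rw [h1, h2]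
  refine Finset.sum_congr rfl fun i hi => ?_
  rw [Finset.mem_range] at hi
  have hij : i ≤ j := by omega
  have hiℓ : i ≤ ℓ := by omega
  by_cases h : j + k * i ≤ n
  · rw [if_pos h]
  · rw [if_neg h]
    rcases Nat.eq_zero_or_pos i with rfl | hi1
    · omega
    · have hki : k * i + i ≤ n := hle i hi1 hiℓ
      have hch : (n - k * i - 1).choose (j - 1) = 0 := by
        apply Nat.choose_eq_zero_of_lt
        generalize hKI : k * i = a at *
        omega
      rw [hch]
      simp

/-- reindex the inner correction sum for a fixed `i`. -/
private lemma km_inner (k n ℓ i : ℕ) (lam : ℝ) (hi1 : 1 ≤ i) (hiℓ : i ≤ ℓ)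
    (hle : i * (k + 1) ≤ n) :
    (∑ j ∈ Finset.Icc 1 n, lam ^ j / (Nat.factorial j : ℝ) *
        ((-1 : ℝ) ^ i * (j.choose i : ℝ) * (((n - k * i - 1).choose (j - 1) : ℕ) : ℝ)))
      = (-1 : ℝ) ^ i * lam ^ i / (Nat.factorial i : ℝ) *
          ∑ j ∈ Finset.range (n - i * (k + 1) + 1),
            ((n - i * (k + 1) + i - 1).choose (j + i - 1) : ℝ) * lam ^ j /
              (Nat.factorial j : ℝ) := by
  have hki : k * i + i ≤ n := by
    have : i * (k + 1) = k * i + i := by ring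
    omega
  -- restrict to Ico i (n - k*i + 1)
  have hsub : Finset.Ico i (n - k * i + 1) ⊆ Finset.Icc 1 n := by
    intro j hj
    rw [Finset.mem_Ico] at hj
    rw [Finset.mem_Icc]
    generalize hKI : k * i = a at *
    omega
  have hzero : ∀ j ∈ Finset.Icc 1 n, j ∉ Finset.Ico i (n - k * i + 1) →
      lam ^ j / (Nat.factorial j : ℝ) *
        ((-1 : ℝ) ^ i * (j.choose i : ℝ) * (((n - k * i - 1).choose (j - 1) : ℕ) : ℝ)) = 0 := by
    intro j hj hnj
    rw [Finset.mem_Icc] at hj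
    rw [Finset.mem_Ico] at hnj
    rcases Nat.lt_or_ge j i with h | h
    · rw [Nat.choose_eq_zero_of_lt h]
      simp
    · have hj2 : n - k * i + 1 ≤ j := by omega
      have : (n - k * i - 1).choose (j - 1) = 0 := by
        apply Nat.choose_eq_zero_of_lt
        generalize hKI : k * i = a at *
        omega
      rw [this]
      simp
  rw [← Finset.sum_subset hsub hzero, Finset.sum_Ico_eq_sum_range]
  have hcount : n - k * i + 1 - i = n - i * (k + 1) + 1 := by
    have : i * (k + 1) = k * i + i := by ring
    generalize hKI : k * i = a at *
    omega
  rw [hcount, Finset.mul_sum]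
  refine Finset.sum_congr rfl fun j hj => ?_
  rw [Finset.mem_range] at hj
  have harg : n - i * (k + 1) + i - 1 = n - k * i - 1 := by
    have : i * (k + 1) = k * i + i := by ring
    generalize hKI : k * i = a at *
    omega
  have harg2 : i + j - 1 = j + i - 1 := by omega
  rw [harg]
  have hch : ((i + j).choose i : ℝ) = (Nat.factorial (i + j) : ℝ) /
      ((Nat.factorial i : ℝ) * (Nat.factorial j : ℝ)) := by
    rw [Nat.cast_choose ℝ (Nat.le_add_right i j), Nat.add_sub_cancel_left]
  rw [harg2, hch, pow_add]
  have f1 : (Nat.factorial (i + j) : ℝ) ≠ 0 := Nat.cast_ne_zero.2 (Nat.factorial_ne_zero _)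
  have f2 : (Nat.factorial i : ℝ) ≠ 0 := Nat.cast_ne_zero.2 (Nat.factorial_ne_zero _)
  have f3 : (Nat.factorial j : ℝ) ≠ 0 := Nat.cast_ne_zero.2 (Nat.factorial_ne_zero _)
  field_simp


private lemma km_coeff_pow_eq (k j n : ℕ) :
    (PowerSeries.coeff (R := ℝ) n) ((∑ i : Fin k, (PowerSeries.X : ℝ⟦X⟧) ^ (i.1 + 1)) ^ j)
      = ∑ f ∈ (Finset.piAntidiag (Finset.univ : Finset (Fin k)) j).filter
          (fun f => ∑ i : Fin k, (i.1 + 1) * f i = n),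
          ((Nat.multinomial Finset.univ f : ℕ) : ℝ) := by
  rw [Finset.sum_pow_eq_sum_piAntidiag, map_sum, Finset.sum_filter]
  refine Finset.sum_congr rfl fun f _ => ?_
  have hprod : (∏ i : Fin k, ((PowerSeries.X : ℝ⟦X⟧) ^ (i.1 + 1)) ^ f i)
      = (PowerSeries.X : ℝ⟦X⟧) ^ (∑ i : Fin k, (i.1 + 1) * f i) := by
    rw [← Finset.prod_pow_eq_pow_sum]
    exact Finset.prod_congr rfl fun i _ => by rw [← pow_mul]
  rw [hprod, ← nsmul_eq_mul, map_nsmul, PowerSeries.coeff_X_pow]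
  by_cases h : ∑ i : Fin k, (i.1 + 1) * f i = n
  · rw [if_pos h, if_pos (by omega : n = ∑ i : Fin k, (i.1 + 1) * f i)]
    simp
  · rw [if_neg h, if_neg (by omega : ¬ n = ∑ i : Fin k, (i.1 + 1) * f i)]
    simp

private lemma km_pois_eq (k n : ℕ) (lam : ℝ) :
    poissonOrderKSum k n lam
      = ∑ j ∈ Finset.range (n + 1), lam ^ j / (Nat.factorial j : ℝ) *
          (PowerSeries.coeff (R := ℝ) n) ((∑ i : Fin k, (PowerSeries.X : ℝ⟦X⟧) ^ (i.1 + 1)) ^ j) := by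
  rw [poissonOrderKSum]
  rw [← Finset.sum_fiberwise_of_maps_to (g := fun f : Fin k → ℕ => ∑ i : Fin k, f i)
    (t := Finset.range (n + 1)) ?hmap]
  case hmap =>
    intro f hf
    rw [Finset.mem_filter] at hf
    rw [Finset.mem_range]
    have : (∑ i : Fin k, f i) ≤ ∑ i : Fin k, (i.1 + 1) * f i :=
      Finset.sum_le_sum fun i _ => Nat.le_mul_of_pos_left (f i) (Nat.succ_pos _)
    exact Nat.lt_succ_of_le (hf.2 ▸ this)
  refine Finset.sum_congr rfl fun j hj => ?_
  rw [km_coeff_pow_eq]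
  have hsets : ((Fintype.piFinset fun _ : Fin k => Finset.range (n + 1)).filter
        (fun f => ∑ i : Fin k, (i.1 + 1) * f i = n)).filter
        (fun f => ∑ i : Fin k, f i = j)
      = (Finset.piAntidiag (Finset.univ : Finset (Fin k)) j).filter
          (fun f => ∑ i : Fin k, (i.1 + 1) * f i = n) := by
    ext f
    simp only [Finset.mem_filter, Fintype.mem_piFinset, Finset.mem_range,
      Finset.mem_piAntidiag]
    constructor
    · rintro ⟨⟨-, hdeg⟩, hsum⟩
      exact ⟨⟨hsum, fun i _ => Finset.mem_univ i⟩, hdeg⟩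
    · rintro ⟨⟨hsum, -⟩, hdeg⟩
      refine ⟨⟨fun i => ?_, hdeg⟩, hsum⟩
      have h1 : (i.1 + 1) * f i ≤ ∑ i : Fin k, (i.1 + 1) * f i :=
        Finset.single_le_sum (f := fun i : Fin k => (i.1 + 1) * f i)
          (fun _ _ => Nat.zero_le _) (Finset.mem_univ i)
      have h2 : f i ≤ (i.1 + 1) * f i := Nat.le_mul_of_pos_left (f i) (Nat.succ_pos _)
      omega
  rw [hsets, Finset.mul_sum]
  refine Finset.sum_congr rfl fun f hf => ?_
  rw [Finset.mem_filter, Finset.mem_piAntidiag] at hf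
  obtain ⟨⟨hsum, -⟩, -⟩ := hf
  have hmult : ((Nat.multinomial Finset.univ f : ℕ) : ℝ)
      = (Nat.factorial j : ℝ) / ∏ i : Fin k, (Nat.factorial (f i) : ℝ) := by
    have hspec := Nat.multinomial_spec (Finset.univ : Finset (Fin k)) f
    rw [hsum] at hspec
    have hprodne : (∏ i : Fin k, (Nat.factorial (f i) : ℝ)) ≠ 0 :=
      Finset.prod_ne_zero_iff.2 fun i _ => Nat.cast_ne_zero.2 (Nat.factorial_ne_zero _)
    rw [eq_div_iff hprodne]
    rw [← Nat.cast_prod, ← Nat.cast_mul, mul_comm, hspec]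
  rw [hmult, hsum]
  have hfj : (Nat.factorial j : ℝ) ≠ 0 := Nat.cast_ne_zero.2 (Nat.factorial_ne_zero _)
  field_simp

theorem kostadinova_minkova_formula (k n ℓ m : ℕ) (hk : 2 ≤ k) (hℓ : 1 ≤ ℓ) (hm : m ≤ k)
    (hn : n = ℓ * (k + 1) + m) (lam : ℝ) (hlam : 0 < lam) :
    Real.exp (-(k * lam)) * poissonOrderKSum k n lam =
      Real.exp (-(k * lam)) *
        ((∑ j ∈ Finset.Icc 1 n, (Nat.choose (n - 1) (j - 1) : ℝ) * lam ^ j / (Nat.factorial j : ℝ))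
          - ∑ i ∈ Finset.Icc 1 ℓ, (-1 : ℝ) ^ (i - 1) * lam ^ i / (Nat.factorial i : ℝ) *
              ∑ j ∈ Finset.range (n - i * (k + 1) + 1),
                (Nat.choose (n - i * (k + 1) + i - 1) (j + i - 1) : ℝ) * lam ^ j /
                  (Nat.factorial j : ℝ)) := by
  have hn1 : 1 ≤ n := by
    have : 1 * (k + 1) ≤ ℓ * (k + 1) := Nat.mul_le_mul_right _ hℓ
    omega
  have hle : ∀ i, 1 ≤ i → i ≤ ℓ → k * i + i ≤ n := by
    intro i hi1 hiℓ
    have h1 : i * (k + 1) ≤ ℓ * (k + 1) := Nat.mul_le_mul_right _ hiℓ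
    have h2 : i * (k + 1) = k * i + i := by ring
    omega
  have hlt : n < (ℓ + 1) * (k + 1) := by
    have h1 : (ℓ + 1) * (k + 1) = ℓ * (k + 1) + (k + 1) := by ring
    omega
  congr 1
  -- Step 1: expand the pmf into a sum over j with binomial coefficients
  have hA : poissonOrderKSum k n lam
      = ∑ j ∈ Finset.Icc 1 n, lam ^ j / (Nat.factorial j : ℝ) *
          ∑ i ∈ Finset.range (ℓ + 1), (-1 : ℝ) ^ i * (j.choose i : ℝ) *
            (((n - k * i - 1).choose (j - 1) : ℕ) : ℝ) := by
    rw [km_pois_eq, Finset.range_eq_Ico,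
      Finset.sum_eq_sum_Ico_succ_bot (by omega : 0 < n + 1)]
    have h0 : lam ^ 0 / (Nat.factorial 0 : ℝ) *
        (PowerSeries.coeff (R := ℝ) n) ((∑ i : Fin k, (PowerSeries.X : ℝ⟦X⟧) ^ (i.1 + 1)) ^ 0) = 0 := by
      simp only [pow_zero, PowerSeries.coeff_one, if_neg (show ¬ n = 0 by omega)]
      simp
    rw [h0, zero_add, Finset.Ico_add_one_right_eq_Icc]
    refine Finset.sum_congr rfl fun j hj => ?_
    rw [Finset.mem_Icc] at hj
    rw [km_coeff_q_pow k j n hj.1, km_sum_eq k n ℓ j hj.1 hj.2 hle hlt]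
  rw [hA]
  -- Step 2: rearrange the right-hand side into the same double sum
  have hsplit : ∀ j : ℕ, (∑ i ∈ Finset.range (ℓ + 1), (-1 : ℝ) ^ i * (j.choose i : ℝ) *
        (((n - k * i - 1).choose (j - 1) : ℕ) : ℝ))
      = ((n - 1).choose (j - 1) : ℝ) + ∑ i ∈ Finset.Icc 1 ℓ, (-1 : ℝ) ^ i * (j.choose i : ℝ) *
          (((n - k * i - 1).choose (j - 1) : ℕ) : ℝ) := by
    intro j
    rw [Finset.range_eq_Ico, Finset.sum_eq_sum_Ico_succ_bot (by omega : 0 < ℓ + 1),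
      Finset.Ico_add_one_right_eq_Icc]
    congr 1
    simp
  have hstep : ∀ j : ℕ, lam ^ j / (Nat.factorial j : ℝ) *
        (∑ i ∈ Finset.range (ℓ + 1), (-1 : ℝ) ^ i * (j.choose i : ℝ) *
          (((n - k * i - 1).choose (j - 1) : ℕ) : ℝ))
      = lam ^ j / (Nat.factorial j : ℝ) * ((n - 1).choose (j - 1) : ℝ)
        + ∑ i ∈ Finset.Icc 1 ℓ, lam ^ j / (Nat.factorial j : ℝ) *
            ((-1 : ℝ) ^ i * (j.choose i : ℝ) * (((n - k * i - 1).choose (j - 1) : ℕ) : ℝ)) := by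
    intro j
    rw [hsplit j, mul_add, Finset.mul_sum]
  calc (∑ j ∈ Finset.Icc 1 n, lam ^ j / (Nat.factorial j : ℝ) *
          ∑ i ∈ Finset.range (ℓ + 1), (-1 : ℝ) ^ i * (j.choose i : ℝ) *
            (((n - k * i - 1).choose (j - 1) : ℕ) : ℝ))
      = (∑ j ∈ Finset.Icc 1 n, lam ^ j / (Nat.factorial j : ℝ) * ((n - 1).choose (j - 1) : ℝ))
        + ∑ j ∈ Finset.Icc 1 n, ∑ i ∈ Finset.Icc 1 ℓ, lam ^ j / (Nat.factorial j : ℝ) *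
            ((-1 : ℝ) ^ i * (j.choose i : ℝ) * (((n - k * i - 1).choose (j - 1) : ℕ) : ℝ)) := by
        rw [← Finset.sum_add_distrib]
        exact Finset.sum_congr rfl fun j _ => hstep j
    _ = (∑ j ∈ Finset.Icc 1 n, ((n - 1).choose (j - 1) : ℝ) * lam ^ j / (Nat.factorial j : ℝ))
        + ∑ i ∈ Finset.Icc 1 ℓ, (-1 : ℝ) ^ i * lam ^ i / (Nat.factorial i : ℝ) *
            ∑ j ∈ Finset.range (n - i * (k + 1) + 1),
              ((n - i * (k + 1) + i - 1).choose (j + i - 1) : ℝ) * lam ^ j /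
                (Nat.factorial j : ℝ) := by
        congr 1
        · exact Finset.sum_congr rfl fun j _ => by ring
        · rw [Finset.sum_comm]
          refine Finset.sum_congr rfl fun i hi => ?_
          rw [Finset.mem_Icc] at hi
          have hikn : i * (k + 1) ≤ n := by
            have h1 : i * (k + 1) ≤ ℓ * (k + 1) := Nat.mul_le_mul_right _ hi.2
            omega
          exact km_inner k n ℓ i lam hi.1 hi.2 hikn
    _ = (∑ j ∈ Finset.Icc 1 n, ((n - 1).choose (j - 1) : ℝ) * lam ^ j / (Nat.factorial j : ℝ))
        - ∑ i ∈ Finset.Icc 1 ℓ, (-1 : ℝ) ^ (i - 1) * lam ^ i / (Nat.factorial i : ℝ) *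
            ∑ j ∈ Finset.range (n - i * (k + 1) + 1),
              ((n - i * (k + 1) + i - 1).choose (j + i - 1) : ℝ) * lam ^ j /
                (Nat.factorial j : ℝ) := by
        rw [sub_eq_add_neg, ← Finset.sum_neg_distrib]
        congr 1
        refine Finset.sum_congr rfl fun i hi => ?_
        rw [Finset.mem_Icc] at hi
        have hpow : (-1 : ℝ) ^ i = (-1 : ℝ) ^ (i - 1) * (-1) := by
          rw [← pow_succ]
          congr 1
          omega
        rw [hpow]
        ring
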